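/- In a byte-granularity model where NVM records are partial writes (offset, length, data) within a page and disk write-backs store the entire current page, if Algorithm 2 is followed (each write-back additionally appends a WRITEBACK marker record to the NVM log, and recovery replays, on top of the disk page, all NVM write records appearing after the last WRITEBACK marker, in order), then after any crash the recovered page equals the page-cache contents at the time of the last sync or write-back before the crash; in particular every byte written by a write that was followed by a sync before the crash is present in the recovered page, unless overwritten by a later synced or written-back write. -/

import Mathlib

/- Byte-granularity model: a page is a function from offsets to bytes; a
   record is a partial overwrite (off, len, data) within the page. -/

/-- A page of `n` bytes. -/
abbrev Page (n : ℕ) := Fin n → UInt8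

/-- A partial-write record: bytes `[off, off+len)` get `data 0, …, data (len-1)`. -/
structure Rec (n : ℕ) where
  off  : ℕ
  len  : ℕ
  data : ℕ → UInt8
  wf   : off + len ≤ n

/-- `r` covers offset `i`. -/
def covers {n : ℕ} (r : Rec n) (i : Fin n) : Prop :=
  r.off ≤ i.val ∧ i.val < r.off + r.len

/-- Apply one partial-write record to a page. -/
def applyRec {n : ℕ} (r : Rec n) (p : Page n) : Page n := fun i =>
  if r.off ≤ i.val ∧ i.val < r.off + r.len then r.data (i.val - r.off) else p i

/-- Apply a list of records in order (sequential overwrite application). -/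
def applyRecs {n : ℕ} (rs : List (Rec n)) (p : Page n) : Page n :=
  rs.foldl (fun p r => applyRec r p) p

/-- NVM log entries: a partial WRITE record, or a WRITEBACK marker. -/
inductive LogEntry (n : ℕ)
  | wr (r : Rec n)
  | wb

/-- State: page cache, disk page, NVM log. -/
structure St (n : ℕ) where
  cache : Page n
  disk  : Page n
  log   : List (LogEntry n)

/-- Operations: an arbitrary-length sync write (applied to the cache and
    appended to the NVM log), or a write-back (whole cache page copied to
    disk, WRITEBACK marker appended to the NVM log — Algorithm 2). -/
inductive Ev (n : ℕ)
  | syncWrite (r : Rec n)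
  | writeback

def step {n : ℕ} (s : St n) : Ev n → St n
  | .syncWrite r => { s with cache := applyRec r s.cache, log := s.log ++ [.wr r] }
  | .writeback   => { s with disk := s.cache, log := s.log ++ [.wb] }

def run {n : ℕ} (s : St n) (tr : List (Ev n)) : St n := tr.foldl step s

/-- The WRITE records appearing after the last WRITEBACK marker, in log order. -/
def suffixRecords {n : ℕ} (log : List (LogEntry n)) : List (Rec n) :=
  log.foldl (fun acc e => match e with | .wb => [] | .wr r => acc ++ [r]) []

/-- Algorithm 2 recovery: replay, on top of the disk page, all NVM WRITE
    records after the last WRITEBACK marker, in order. -/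
def recover {n : ℕ} (s : St n) : Page n := applyRecs (suffixRecords s.log) s.disk

/-- With Algorithm 2, after any crash the recovered page
    equals the page-cache contents at the time of the last sync or write-back
    before the crash (= the final cache, since only these events occur); in
    particular every byte written by a synced write is present in the
    recovered page unless overwritten by a later synced or written-back
    write. -/
lemma run_append {n : ℕ} (s : St n) (a b : List (Ev n)) :
    run s (a ++ b) = run (run s a) b := List.foldl_append

lemma suffixRecords_append {n : ℕ} (l : List (LogEntry n)) (e : LogEntry n) :
    suffixRecords (l ++ [e]) =
      match e with | .wb => [] | .wr r => suffixRecords l ++ [r] := by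
  simp [suffixRecords, List.foldl_append]

lemma invariant_preserved {n : ℕ} (tr : List (Ev n)) :
    ∀ s : St n, applyRecs (suffixRecords s.log) s.disk = s.cache →
      applyRecs (suffixRecords (run s tr).log) (run s tr).disk = (run s tr).cache := by
  induction tr with
  | nil => intro s h; exact h
  | cons e tr ih =>
    intro s h
    show applyRecs (suffixRecords (run (step s e) tr).log) (run (step s e) tr).disk
        = (run (step s e) tr).cache
    apply ih
    cases e with
    | syncWrite r =>
      simp only [step, suffixRecords_append]
      simp [applyRecs, List.foldl_append, ← h, applyRecs]
    | writeback =>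
      simp [step, suffixRecords_append, applyRecs]

lemma cache_unchanged {n : ℕ} (tr : List (Ev n)) :
    ∀ s : St n, ∀ i : Fin n,
      (∀ r', Ev.syncWrite r' ∈ tr → ¬ covers r' i) →
      (run s tr).cache i = s.cache i := by
  induction tr with
  | nil => intro s i _; rfl
  | cons e tr ih =>
    intro s i h
    show (run (step s e) tr).cache i = s.cache i
    rw [ih (step s e) i (fun r' hr' => h r' (List.mem_cons_of_mem _ hr'))]
    cases e with
    | syncWrite r =>
      have hnc : ¬ covers r i := h r List.mem_cons_self
      simp [step, applyRec, covers] at *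
      intro h1 h2; exact absurd h2 (not_lt.mpr (hnc h1))
    | writeback => rfl

theorem algorithm2_recovery_correct (n : ℕ) (p₀ : Page n) (tr : List (Ev n)) :
    recover (run ⟨p₀, p₀, []⟩ tr) = (run ⟨p₀, p₀, []⟩ tr).cache ∧
    (∀ t₁ r t₂, tr = t₁ ++ [Ev.syncWrite r] ++ t₂ →
      ∀ i : Fin n, covers r i →
        (∀ r', Ev.syncWrite r' ∈ t₂ → ¬ covers r' i) →
        recover (run ⟨p₀, p₀, []⟩ tr) i = r.data (i.val - r.off)) := by
  have hrec : recover (run ⟨p₀, p₀, []⟩ tr) = (run ⟨p₀, p₀, []⟩ tr).cache :=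
    invariant_preserved tr ⟨p₀, p₀, []⟩ rfl
  refine ⟨hrec, ?_⟩
  intro t₁ r t₂ htr i hcov hlater
  rw [hrec, htr, run_append, run_append]
  rw [cache_unchanged t₂ _ i hlater]
  show (step (run ⟨p₀, p₀, []⟩ t₁) (Ev.syncWrite r)).cache i = _
  simp [step, applyRec, covers] at *
  intro h; exact absurd hcov.2 (not_lt.mpr (h hcov.1))
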